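/- Let F : [0,∞) → ℝ be differentiable with F(t) ≥ 0 for all t ≥ 0, and let a > 0, K ≥ 0, θ > 0 and A ≥ 1 be constants. Suppose that for every t ≥ 0 and every M ≥ A one has F′(t) ≤ −(a/M)·F(t) + K/M^{1+θ}. Then there exists a constant C > 0, depending only on F(0), K, a, θ and A, such that F(t) ≤ C·(1+t)^{−θ} for all t ≥ 0. -/

import Mathlib

/-- a family of differential inequalities
`F′(t) ≤ −(a/M) F(t) + K/M^{1+θ}` (for all `t ≥ 0` and all `M ≥ A`) for a
nonnegative differentiable `F` yields the algebraic decay `F(t) ≤ C (1+t)^{−θ}`. -/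
theorem decay_from_family_of_diff_ineq
    (F F' : ℝ → ℝ) (hderiv : ∀ t ≥ (0 : ℝ), HasDerivAt F (F' t) t)
    (hFnonneg : ∀ t ≥ (0 : ℝ), 0 ≤ F t)
    (a K θ A : ℝ) (ha : 0 < a) (hK : 0 ≤ K) (hθ : 0 < θ) (hA : 1 ≤ A)
    (hineq : ∀ t ≥ (0 : ℝ), ∀ M ≥ A, F' t ≤ -(a / M) * F t + K / M ^ (1 + θ)) :
    ∃ C > (0 : ℝ), ∀ t ≥ (0 : ℝ), F t ≤ C * (1 + t) ^ (-θ) := by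
  set c : ℝ := a / (θ + 1) with hc_def
  have hθ1 : (0:ℝ) < θ + 1 := by linarith
  have hc : 0 < c := div_pos ha hθ1
  have hca : c * (θ + 1) = a := by rw [hc_def]; exact div_mul_cancel₀ a hθ1.ne'
  set m : ℝ := min 1 c with hm_def
  have hm : 0 < m := lt_min one_pos hc
  -- basic facts about x = A + c t for t ≥ 0
  have hx1 : ∀ t : ℝ, 0 ≤ t → 1 ≤ A + c * t := fun t ht => by nlinarith
  have hx0 : ∀ t : ℝ, 0 ≤ t → 0 < A + c * t := fun t ht => lt_of_lt_of_le one_pos (hx1 t ht)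
  set g : ℝ → ℝ := fun t => (A + c * t) ^ (θ + 1) * F t - K * t with hg_def
  have hg_deriv : ∀ t : ℝ, 0 ≤ t → HasDerivAt g
      (c * (θ + 1) * (A + c * t) ^ θ * F t + (A + c * t) ^ (θ + 1) * F' t - K) t := by
    intro t ht
    have h1 : HasDerivAt (fun s : ℝ => A + c * s) c t := by
      simpa using ((hasDerivAt_id t).const_mul c).const_add A
    have h2 : HasDerivAt (fun s : ℝ => (A + c * s) ^ (θ + 1))
        (c * (θ + 1) * (A + c * t) ^ ((θ + 1) - 1)) t :=
      h1.rpow_const (Or.inl (ne_of_gt (hx0 t ht)))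
    rw [show (θ + 1) - 1 = θ by ring] at h2
    have := (h2.mul (hderiv t ht)).sub ((hasDerivAt_id t).const_mul K)
    exact this.congr_deriv (by ring)
  -- the derivative of g is nonpositive on [0,∞)
  have hg_le : ∀ t : ℝ, 0 ≤ t →
      c * (θ + 1) * (A + c * t) ^ θ * F t + (A + c * t) ^ (θ + 1) * F' t - K ≤ 0 := by
    intro t ht
    set x : ℝ := A + c * t with hx_def
    have hxpos : 0 < x := hx0 t ht
    have hxA : A ≤ x := by nlinarith
    have hF := hineq t ht x hxA
    have hxθ : (0:ℝ) < x ^ θ := Real.rpow_pos_of_pos hxpos θ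
    have hxθ1 : (0:ℝ) < x ^ (θ + 1) := Real.rpow_pos_of_pos hxpos (θ + 1)
    have hsplit : x ^ (θ + 1) = x ^ θ * x := by
      rw [Real.rpow_add hxpos, Real.rpow_one]
    have h3 : x ^ (θ + 1) * F' t ≤ x ^ (θ + 1) * (-(a / x) * F t + K / x ^ (1 + θ)) :=
      mul_le_mul_of_nonneg_left hF (le_of_lt hxθ1)
    have h4 : x ^ (θ + 1) * (-(a / x) * F t + K / x ^ (1 + θ))
        = -(a * (x ^ θ * F t)) + K := by
      rw [show (1 + θ) = θ + 1 by ring, hsplit]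
      field_simp
    have hFt : 0 ≤ F t := hFnonneg t ht
    have : c * (θ + 1) * (x ^ θ * F t) = a * (x ^ θ * F t) := by rw [hca]
    nlinarith [mul_nonneg (le_of_lt hxθ) hFt]
  -- g is antitone on [0,∞)
  have hanti : AntitoneOn g (Set.Ici (0:ℝ)) := by
    apply antitoneOn_of_deriv_nonpos (convex_Ici 0)
    · intro t ht
      exact (hg_deriv t ht).continuousAt.continuousWithinAt
    · intro t ht
      rw [interior_Ici] at ht
      exact (hg_deriv t (le_of_lt ht)).differentiableAt.differentiableWithinAt
    · intro t ht
      rw [interior_Ici] at ht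
      rw [(hg_deriv t (le_of_lt ht)).deriv]
      exact hg_le t (le_of_lt ht)
  -- main estimate : x^(θ+1) F t ≤ A^(θ+1) F 0 + K t
  have hmain : ∀ t : ℝ, 0 ≤ t →
      (A + c * t) ^ (θ + 1) * F t ≤ A ^ (θ + 1) * F 0 + K * t := by
    intro t ht
    have := hanti (Set.self_mem_Ici) ht ht
    simp only [hg_def, mul_zero, add_zero, sub_zero] at this
    linarith
  -- the constant
  set C0 : ℝ := A ^ (θ + 1) * F 0 + K / c with hC0_def
  have hApos : (0:ℝ) < A := lt_of_lt_of_le one_pos hA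
  have hC0 : 0 ≤ C0 := by
    have : 0 ≤ A ^ (θ + 1) * F 0 :=
      mul_nonneg (le_of_lt (Real.rpow_pos_of_pos hApos _)) (hFnonneg 0 le_rfl)
    have : 0 ≤ K / c := div_nonneg hK hc.le
    positivity
  refine ⟨C0 / m ^ θ + 1, by positivity, ?_⟩
  intro t ht
  set x : ℝ := A + c * t with hx_def
  have hxpos : 0 < x := hx0 t ht
  have hx1t : m * (1 + t) ≤ x := by
    rcases le_total (1:ℝ) c with h | h
    · have : m = 1 := min_eq_left h
      rw [this]; nlinarith
    · have : m = c := min_eq_right h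
      rw [this]; nlinarith
  have h1t : (0:ℝ) < 1 + t := by linarith
  have h1tθ : (0:ℝ) < (1 + t) ^ θ := Real.rpow_pos_of_pos h1t θ
  -- reduce to F t * (1+t)^θ ≤ C
  rw [Real.rpow_neg h1t.le, ← div_eq_mul_inv, le_div_iff₀ h1tθ]
  have hsplit : x ^ (θ + 1) = x ^ θ * x := by
    rw [Real.rpow_add hxpos, Real.rpow_one]
  have hFt : 0 ≤ F t := hFnonneg t ht
  -- (1+t)^θ ≤ x^θ / m^θ
  have hmono : (1 + t) ^ θ ≤ (x / m) ^ θ := by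
    apply Real.rpow_le_rpow h1t.le _ hθ.le
    rw [le_div_iff₀ hm]
    linarith [hx1t]
  have hdivθ : (x / m) ^ θ = x ^ θ / m ^ θ := Real.div_rpow hxpos.le hm.le θ
  have hmθ : (0:ℝ) < m ^ θ := Real.rpow_pos_of_pos hm θ
  have hxθ : (0:ℝ) < x ^ θ := Real.rpow_pos_of_pos hxpos θ
  -- F t * x^θ ≤ C0
  have hstep : F t * x ^ θ ≤ C0 := by
    have h1 : x ^ θ * x * F t ≤ A ^ (θ + 1) * F 0 + K * t := by
      rw [← hsplit]; exact hmain t ht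
    have hxA : A ≤ x := by nlinarith
    have hx1' : 1 ≤ x := hx1 t ht
    have hKt : K * t ≤ (K / c) * x := by
      have : c * t ≤ x := by nlinarith
      have := mul_le_mul_of_nonneg_left this (div_nonneg hK hc.le)
      calc K * t = (K / c) * (c * t) := by field_simp
        _ ≤ (K / c) * x := this
    have hA1 : A ^ (θ + 1) * F 0 ≤ (A ^ (θ + 1) * F 0) * x := by
      have h0 : 0 ≤ A ^ (θ + 1) * F 0 :=
        mul_nonneg (le_of_lt (Real.rpow_pos_of_pos hApos _)) (hFnonneg 0 le_rfl)
      exact le_mul_of_one_le_right h0 hx1'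
    have hC0x : A ^ (θ + 1) * F 0 + K * t ≤ C0 * x := by
      rw [hC0_def, add_mul]; exact add_le_add hA1 hKt
    have h2 : F t * x ^ θ * x ≤ C0 * x := by
      have := h1.trans hC0x; linarith [this, (by ring : x ^ θ * x * F t = F t * x ^ θ * x)]
    exact le_of_mul_le_mul_right h2 hxpos
  calc F t * (1 + t) ^ θ ≤ F t * (x ^ θ / m ^ θ) := by
        rw [← hdivθ]; exact mul_le_mul_of_nonneg_left hmono hFt
    _ = (F t * x ^ θ) / m ^ θ := by ring
    _ ≤ C0 / m ^ θ := by gcongr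
    _ ≤ C0 / m ^ θ + 1 := by linarith
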